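/- Let G(T) = T·e^T/(e^T − 1) ∈ ℚ[[T]]. Then G satisfies the identity G(x+y) = L(x,y) + L(y,x) in ℚ[[x,y]], where L(x,y) = ((G(x+y) − G(y))/x)·G(x). -/

import Mathlib

/-- The generating series `G(T) = T·e^T/(e^T − 1) = e^T · ((e^T − 1)/T)⁻¹ ∈ ℚ[[T]]`. -/
noncomputable def bernG : PowerSeries ℚ :=
  PowerSeries.exp ℚ * (PowerSeries.mk fun n => (1 : ℚ) / (n + 1).factorial)⁻¹

/-- The coefficients `t_n` of `G(T) = Σ_n t_n T^n`. -/
noncomputable def tcoef (n : ℕ) : ℚ := PowerSeries.coeff n bernG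

open PowerSeries Finset

/-- pairing into `Fin 2 →₀ ℕ` -/
noncomputable def pr (u v : ℕ) : Fin 2 →₀ ℕ := Finsupp.single 0 u + Finsupp.single 1 v

@[simp] lemma pr_apply0 (u v : ℕ) : pr u v 0 = u := by
  simp [pr, Finsupp.single_apply]

@[simp] lemma pr_apply1 (u v : ℕ) : pr u v 1 = v := by
  simp [pr, Finsupp.single_apply]

lemma pr_self (p : Fin 2 →₀ ℕ) : pr (p 0) (p 1) = p := by
  ext i
  fin_cases i <;> simp

lemma eq_iff2 (p q : Fin 2 →₀ ℕ) : p = q ↔ p 0 = q 0 ∧ p 1 = q 1 := by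
  constructor
  · rintro rfl; exact ⟨rfl, rfl⟩
  · rintro ⟨h0, h1⟩; ext i; fin_cases i <;> assumption

lemma coeff_mul₂ (f g : MvPowerSeries (Fin 2) ℚ) (p : Fin 2 →₀ ℕ) :
    MvPowerSeries.coeff p (f * g) =
      ∑ u ∈ range (p 0 + 1), ∑ v ∈ range (p 1 + 1),
        MvPowerSeries.coeff (pr u v) f * MvPowerSeries.coeff (p - pr u v) g := by
  rw [MvPowerSeries.coeff_mul, ← Finset.sum_product']
  refine Finset.sum_nbij' (fun x => (x.1 0, x.1 1)) (fun x => (pr x.1 x.2, p - pr x.1 x.2))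
    ?_ ?_ ?_ ?_ ?_
  · rintro ⟨q, r⟩ hqr
    have hqr : q + r = p := Finset.HasAntidiagonal.mem_antidiagonal.mp hqr
    simp only [Finset.mem_product, Finset.mem_range]
    constructor
    · have : q 0 + r 0 = p 0 := by rw [← hqr]; simp
      omega
    · have : q 1 + r 1 = p 1 := by rw [← hqr]; simp
      omega
  · rintro ⟨u, v⟩ huv
    simp only [Finset.mem_product, Finset.mem_range] at huv
    refine Finset.HasAntidiagonal.mem_antidiagonal.mpr ?_
    apply add_tsub_cancel_of_le
    rw [Finsupp.le_def]
    intro i; fin_cases i <;> simp <;> omega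
  · rintro ⟨q, r⟩ hqr
    have hqr : q + r = p := Finset.HasAntidiagonal.mem_antidiagonal.mp hqr
    have h1 : pr (q 0) (q 1) = q := pr_self q
    simp only [h1]
    have : r = p - q := by
      rw [← hqr]; simp
    simp [this]
  · rintro ⟨u, v⟩ huv
    simp
  · rintro ⟨q, r⟩ hqr
    have hqr : q + r = p := Finset.HasAntidiagonal.mem_antidiagonal.mp hqr
    have h1 : pr (q 0) (q 1) = q := pr_self q
    have : r = p - q := by rw [← hqr]; simp
    simp [h1, this]

noncomputable def bernE : PowerSeries ℚ := PowerSeries.mk fun n => (1 : ℚ) / (n + 1).factorial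

/-- substitution x for T -/
noncomputable def phiX (f : PowerSeries ℚ) : MvPowerSeries (Fin 2) ℚ :=
  fun p => if p 1 = 0 then PowerSeries.coeff (p 0) f else 0

noncomputable def phiY (f : PowerSeries ℚ) : MvPowerSeries (Fin 2) ℚ :=
  fun p => if p 0 = 0 then PowerSeries.coeff (p 1) f else 0

noncomputable def phiXY (f : PowerSeries ℚ) : MvPowerSeries (Fin 2) ℚ :=
  fun p => ((p 0 + p 1).choose (p 0) : ℚ) * PowerSeries.coeff (p 0 + p 1) f

@[simp] lemma coeff_phiX (f : PowerSeries ℚ) (p : Fin 2 →₀ ℕ) :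
    MvPowerSeries.coeff p (phiX f) = if p 1 = 0 then PowerSeries.coeff (p 0) f else 0 := rfl

@[simp] lemma coeff_phiY (f : PowerSeries ℚ) (p : Fin 2 →₀ ℕ) :
    MvPowerSeries.coeff p (phiY f) = if p 0 = 0 then PowerSeries.coeff (p 1) f else 0 := rfl

@[simp] lemma coeff_phiXY (f : PowerSeries ℚ) (p : Fin 2 →₀ ℕ) :
    MvPowerSeries.coeff p (phiXY f)
      = ((p 0 + p 1).choose (p 0) : ℚ) * PowerSeries.coeff (p 0 + p 1) f := rfl

lemma phiX_mul (f g : PowerSeries ℚ) : phiX (f * g) = phiX f * phiX g := by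
  apply MvPowerSeries.ext; intro p
  rw [coeff_mul₂, coeff_phiX]
  by_cases hp : p 1 = 0
  · rw [if_pos hp, PowerSeries.coeff_mul,
      Finset.Nat.sum_antidiagonal_eq_sum_range_succ_mk]
    rw [hp]
    rw [Finset.sum_congr rfl (fun u _ => Finset.sum_range_one (f := fun v =>
      MvPowerSeries.coeff (pr u v) (phiX f) * MvPowerSeries.coeff (p - pr u v) (phiX g)))]
    apply Finset.sum_congr rfl
    intro u hu
    simp only [coeff_phiX, pr_apply1, Finsupp.tsub_apply, pr_apply0, hp, if_pos rfl]
    simp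
  · rw [if_neg hp]
    symm
    apply Finset.sum_eq_zero; intro u _
    apply Finset.sum_eq_zero; intro v hv
    simp only [Finset.mem_range] at hv
    simp only [coeff_phiX, pr_apply1, Finsupp.tsub_apply]
    split_ifs with h1 h2
    · omega
    all_goals ring

lemma phiY_mul (f g : PowerSeries ℚ) : phiY (f * g) = phiY f * phiY g := by
  apply MvPowerSeries.ext; intro p
  rw [coeff_mul₂, coeff_phiY]
  by_cases hp : p 0 = 0
  · rw [if_pos hp, PowerSeries.coeff_mul,
      Finset.Nat.sum_antidiagonal_eq_sum_range_succ_mk]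
    rw [hp]
    rw [Finset.sum_range_one (f := fun u => ∑ v ∈ range (p 1 + 1),
      MvPowerSeries.coeff (pr u v) (phiY f) * MvPowerSeries.coeff (p - pr u v) (phiY g))]
    apply Finset.sum_congr rfl
    intro v hv
    simp only [coeff_phiY, pr_apply0, Finsupp.tsub_apply, pr_apply1, hp, if_pos rfl]
    simp
  · rw [if_neg hp]
    symm
    apply Finset.sum_eq_zero; intro u hu
    apply Finset.sum_eq_zero; intro v _
    simp only [Finset.mem_range] at hu
    simp only [coeff_phiY, pr_apply0, Finsupp.tsub_apply]
    split_ifs with h1 h2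
    · omega
    all_goals ring

lemma phiXY_mul (f g : PowerSeries ℚ) : phiXY (f * g) = phiXY f * phiXY g := by
  apply MvPowerSeries.ext; intro p
  set a := p 0 with ha
  set b := p 1 with hb
  set n := a + b with hn
  set F : ℕ → ℕ → ℚ := fun u i =>
    (i.choose u : ℚ) * ((n - i).choose (a - u) : ℚ)
      * (PowerSeries.coeff i f * PowerSeries.coeff (n - i) g) with hF
  have hRHS : MvPowerSeries.coeff p (phiXY f * phiXY g)
      = ∑ u ∈ range (a + 1), ∑ v ∈ range (b + 1), F u (u + v) := by
    rw [coeff_mul₂]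
    apply Finset.sum_congr rfl; intro u hu
    apply Finset.sum_congr rfl; intro v hv
    simp only [Finset.mem_range] at hu hv
    simp only [coeff_phiXY, pr_apply0, pr_apply1, Finsupp.tsub_apply, hF]
    have h0 : a - u + (b - v) = n - (u + v) := by omega
    rw [h0]
    ring
  have hstep : ∀ u ∈ range (a + 1),
      ∑ v ∈ range (b + 1), F u (u + v) = ∑ i ∈ range (n + 1), F u i := by
    intro u hu
    simp only [Finset.mem_range] at hu
    have e1 : ∑ v ∈ range (b + 1), F u (u + v) = ∑ i ∈ Finset.Ico u (u + (b + 1)), F u i := by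
      rw [Finset.sum_Ico_eq_sum_range]
      simp
    have e2 : ∑ i ∈ Finset.Ico 0 u, F u i = 0 := by
      apply Finset.sum_eq_zero; intro i hi
      simp only [Finset.mem_Ico] at hi
      have : i.choose u = 0 := Nat.choose_eq_zero_of_lt (by omega)
      simp [hF, this]
    have e3 : ∑ i ∈ Finset.Ico 0 u, F u i + ∑ i ∈ Finset.Ico u (u + (b + 1)), F u i
        = ∑ i ∈ Finset.Ico 0 (u + (b + 1)), F u i :=
      Finset.sum_Ico_consecutive _ (by omega) (by omega)
    have e4 : ∑ i ∈ range (u + (b + 1)), F u i = ∑ i ∈ range (n + 1), F u i := by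
      apply Finset.sum_subset
      · apply Finset.range_subset_range.2; omega
      · intro i hi hni
        simp only [Finset.mem_range] at hi hni
        have : (n - i).choose (a - u) = 0 := Nat.choose_eq_zero_of_lt (by omega)
        simp [hF, this]
    rw [e1]
    have e5 : ∑ i ∈ Finset.Ico u (u + (b + 1)), F u i
        = ∑ i ∈ range (u + (b + 1)), F u i := by
      rw [Finset.range_eq_Ico, ← e3, e2, zero_add]
    rw [e5, e4]
  rw [hRHS, Finset.sum_congr rfl hstep, Finset.sum_comm]
  rw [coeff_phiXY, PowerSeries.coeff_mul, Finset.Nat.sum_antidiagonal_eq_sum_range_succ_mk,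
    Finset.mul_sum]
  apply Finset.sum_congr rfl
  intro i hi
  simp only [Finset.mem_range] at hi
  have hv : (n.choose a : ℚ) = ∑ u ∈ range (a + 1), (i.choose u : ℚ) * ((n - i).choose (a - u)) := by
    have : n = i + (n - i) := by omega
    rw [this, Nat.add_choose_eq, Finset.Nat.sum_antidiagonal_eq_sum_range_succ_mk]
    simp only [Nat.add_sub_cancel_left]
    push_cast
    rfl
  rw [← hn, hv, Finset.sum_mul]

lemma phiX_sub (f g : PowerSeries ℚ) : phiX (f - g) = phiX f - phiX g := by
  apply MvPowerSeries.ext; intro p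
  simp only [coeff_phiX, map_sub]
  split_ifs <;> ring

lemma phiY_sub (f g : PowerSeries ℚ) : phiY (f - g) = phiY f - phiY g := by
  apply MvPowerSeries.ext; intro p
  simp only [coeff_phiY, map_sub]
  split_ifs <;> ring

lemma phiXY_sub (f g : PowerSeries ℚ) : phiXY (f - g) = phiXY f - phiXY g := by
  apply MvPowerSeries.ext; intro p
  simp only [coeff_phiXY, map_sub]
  ring

lemma phiX_one : phiX 1 = 1 := by
  apply MvPowerSeries.ext; intro p
  simp only [coeff_phiX, PowerSeries.coeff_one, MvPowerSeries.coeff_one, eq_iff2 p 0,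
    Finsupp.coe_zero, Pi.zero_apply]
  split_ifs <;> tauto

lemma phiY_one : phiY 1 = 1 := by
  apply MvPowerSeries.ext; intro p
  simp only [coeff_phiY, PowerSeries.coeff_one, MvPowerSeries.coeff_one, eq_iff2 p 0,
    Finsupp.coe_zero, Pi.zero_apply]
  split_ifs <;> tauto

lemma phiXY_one : phiXY 1 = 1 := by
  apply MvPowerSeries.ext; intro p
  simp only [coeff_phiXY, PowerSeries.coeff_one, MvPowerSeries.coeff_one, eq_iff2 p 0,
    Finsupp.coe_zero, Pi.zero_apply]
  by_cases h : p 0 + p 1 = 0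
  · have h0 : p 0 = 0 := by omega
    have h1 : p 1 = 0 := by omega
    simp [h, h0, h1]
  · rw [if_neg h, if_neg (by omega), mul_zero]

lemma phiX_X : phiX PowerSeries.X = MvPowerSeries.X 0 := by
  apply MvPowerSeries.ext; intro p
  simp only [coeff_phiX, PowerSeries.coeff_X, MvPowerSeries.coeff_X,
    eq_iff2 p (Finsupp.single 0 1), Finsupp.single_apply]
  norm_num
  split_ifs <;> tauto

lemma phiY_X : phiY PowerSeries.X = MvPowerSeries.X 1 := by
  apply MvPowerSeries.ext; intro p
  simp only [coeff_phiY, PowerSeries.coeff_X, MvPowerSeries.coeff_X,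
    eq_iff2 p (Finsupp.single 1 1), Finsupp.single_apply]
  norm_num
  split_ifs <;> tauto

lemma phiXY_X : phiXY PowerSeries.X = MvPowerSeries.X 0 + MvPowerSeries.X 1 := by
  apply MvPowerSeries.ext; intro p
  simp only [coeff_phiXY, PowerSeries.coeff_X, map_add, MvPowerSeries.coeff_X,
    eq_iff2 p (Finsupp.single 0 1), eq_iff2 p (Finsupp.single 1 1), Finsupp.single_apply]
  norm_num
  rcases Nat.eq_zero_or_pos (p 0) with h0 | h0 <;> rcases Nat.eq_zero_or_pos (p 1) with h1 | h1
  · simp [h0, h1]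
  · rcases Nat.lt_or_ge (p 1) 2 with h2 | h2
    · have : p 1 = 1 := by omega
      simp [h0, this]
    · rw [if_neg (by omega), if_neg (by omega), if_neg (by omega)]
      ring
  · rcases Nat.lt_or_ge (p 0) 2 with h2 | h2
    · have : p 0 = 1 := by omega
      simp [h1, this]
    · rw [if_neg (by omega), if_neg (by omega), if_neg (by omega)]
      ring
  · rw [if_neg (by omega), if_neg (by omega), if_neg (by omega)]
    ring

lemma coeff_phiX_mul_phiY (f g : PowerSeries ℚ) (p : Fin 2 →₀ ℕ) :
    MvPowerSeries.coeff p (phiX f * phiY g)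
      = PowerSeries.coeff (p 0) f * PowerSeries.coeff (p 1) g := by
  rw [coeff_mul₂]
  rw [Finset.sum_eq_single (p 0)]
  · rw [Finset.sum_eq_single 0]
    · simp
    · intro v hv hv0
      simp only [coeff_phiX, pr_apply1]
      rw [if_neg hv0, zero_mul]
    · intro h
      exact absurd (Finset.mem_range.2 (by omega)) h
  · intro u hu hu0
    simp only [Finset.mem_range] at hu
    apply Finset.sum_eq_zero; intro v hv
    simp only [coeff_phiY, Finsupp.tsub_apply, pr_apply0]
    rw [if_neg (by omega), mul_zero]
  · intro h
    exact absurd (Finset.mem_range.2 (by omega)) h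

lemma phiX_exp_mul_phiY_exp :
    phiX (PowerSeries.exp ℚ) * phiY (PowerSeries.exp ℚ) = phiXY (PowerSeries.exp ℚ) := by
  apply MvPowerSeries.ext; intro p
  rw [coeff_phiX_mul_phiY, coeff_phiXY]
  simp only [PowerSeries.coeff_exp, Algebra.algebraMap_self, RingHom.id_apply]
  have h := Nat.add_choose_mul_factorial_mul_factorial (p 0) (p 1)
  have h0 : ((p 0).factorial : ℚ) ≠ 0 := Nat.cast_ne_zero.2 (Nat.factorial_ne_zero _)
  have h1 : ((p 1).factorial : ℚ) ≠ 0 := Nat.cast_ne_zero.2 (Nat.factorial_ne_zero _)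
  have h2 : (((p 0 + p 1)).factorial : ℚ) ≠ 0 := Nat.cast_ne_zero.2 (Nat.factorial_ne_zero _)
  have hn : (p 0 + p 1).choose (p 0) * ((p 0).factorial * (p 1).factorial)
      = (p 0 + p 1).factorial := by rw [Nat.choose_symm_add, ← h]; ring
  have h' : ((p 0 + p 1).choose (p 0) : ℚ) * ((p 0).factorial * (p 1).factorial)
      = ((p 0 + p 1).factorial : ℚ) := by exact_mod_cast congrArg (fun x : ℕ => (x : ℚ)) hn
  field_simp
  linarith [h']


noncomputable def bernG' : PowerSeries ℚ := PowerSeries.exp ℚ * bernE⁻¹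

lemma constC_bernE : PowerSeries.constantCoeff bernE = 1 := by
  rw [← PowerSeries.coeff_zero_eq_constantCoeff]
  simp [bernE]

lemma GE : bernG' * bernE = PowerSeries.exp ℚ := by
  rw [bernG', mul_assoc, PowerSeries.inv_mul_cancel _ (by rw [constC_bernE]; norm_num), mul_one]

lemma XE : PowerSeries.X * bernE = PowerSeries.exp ℚ - 1 := by
  rw [mul_comm]
  ext n
  cases n with
  | zero => simp [PowerSeries.coeff_exp]
  | succ n =>
    rw [PowerSeries.coeff_succ_mul_X, map_sub]
    simp [bernE, PowerSeries.coeff_exp]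

lemma Gexp : bernG' * (PowerSeries.exp ℚ - 1) = PowerSeries.X * PowerSeries.exp ℚ := by
  rw [← XE, mul_left_comm, GE]

lemma Xne (s : Fin 2) : (MvPowerSeries.X s : MvPowerSeries (Fin 2) ℚ) ≠ 0 := by
  intro h
  have := congrArg (MvPowerSeries.coeff (Finsupp.single s 1)) h
  simp [MvPowerSeries.coeff_X] at this


/-- in `ℚ[[x,y]]` one has `G(x+y) = L(x,y) + L(y,x)` with
`L(x,y) = ((G(x+y) − G(y))/x)·G(x)`.  Here `Gxy`, `Gx`, `Gy` are the series
`G(x+y)`, `G(x)`, `G(y)` in `ℚ[[x,y]]` (characterized by their coefficients: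
the coefficient of `x^a y^b` in `G(x+y)` is `C(a+b,a)·t_{a+b}`), and `L₁ = L(x,y)`,
`L₂ = L(y,x)` are the quotients witnessing the divisibility by `x` resp. `y`. -/
theorem stmt14 (Gxy Gx Gy L1 L2 : MvPowerSeries (Fin 2) ℚ)
    (hGxy : ∀ p : Fin 2 →₀ ℕ,
      MvPowerSeries.coeff p Gxy = ((p 0 + p 1).choose (p 0) : ℚ) * tcoef (p 0 + p 1))
    (hGx : ∀ p : Fin 2 →₀ ℕ,
      MvPowerSeries.coeff p Gx = if p 1 = 0 then tcoef (p 0) else 0)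
    (hGy : ∀ p : Fin 2 →₀ ℕ,
      MvPowerSeries.coeff p Gy = if p 0 = 0 then tcoef (p 1) else 0)
    (hL1 : MvPowerSeries.X 0 * L1 = (Gxy - Gy) * Gx)
    (hL2 : MvPowerSeries.X 1 * L2 = (Gxy - Gx) * Gy) :
    Gxy = L1 + L2 := by
  have hgb : bernG = bernG' := rfl
  have hGx' : Gx = phiX bernG := by
    apply MvPowerSeries.ext; intro p
    rw [hGx, coeff_phiX]
    simp [tcoef]
  have hGy' : Gy = phiY bernG := by
    apply MvPowerSeries.ext; intro p
    rw [hGy, coeff_phiY]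
    simp [tcoef]
  have hGxy' : Gxy = phiXY bernG := by
    apply MvPowerSeries.ext; intro p
    rw [hGxy, coeff_phiXY]
    simp [tcoef]
  have r1 : Gx * phiX bernE = phiX (PowerSeries.exp ℚ) := by
    rw [hGx', ← phiX_mul, hgb, GE]
  have r2 : MvPowerSeries.X 0 * phiX bernE = phiX (PowerSeries.exp ℚ) - 1 := by
    rw [← phiX_X, ← phiX_mul, XE, phiX_sub, phiX_one]
  have r3 : Gy * phiY bernE = phiY (PowerSeries.exp ℚ) := by
    rw [hGy', ← phiY_mul, hgb, GE]
  have r4 : MvPowerSeries.X 1 * phiY bernE = phiY (PowerSeries.exp ℚ) - 1 := by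
    rw [← phiY_X, ← phiY_mul, XE, phiY_sub, phiY_one]
  have r5 : phiX (PowerSeries.exp ℚ) * phiY (PowerSeries.exp ℚ) = phiXY (PowerSeries.exp ℚ) :=
    phiX_exp_mul_phiY_exp
  have r6 : Gxy * (phiXY (PowerSeries.exp ℚ) - 1)
      = (MvPowerSeries.X 0 + MvPowerSeries.X 1) * phiXY (PowerSeries.exp ℚ) := by
    rw [hGxy', ← phiXY_one, ← phiXY_sub, ← phiXY_mul, hgb, Gexp, phiXY_mul, phiXY_X]
  have hMne : phiX bernE * phiY bernE ≠ 0 := by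
    intro h
    have h0 := congrArg (MvPowerSeries.coeff 0) h
    rw [coeff_phiX_mul_phiY] at h0
    simp [bernE] at h0
  have key : Gxy * (MvPowerSeries.X 1 * Gx + MvPowerSeries.X 0 * Gy
        - MvPowerSeries.X 0 * MvPowerSeries.X 1)
      = (MvPowerSeries.X 0 + MvPowerSeries.X 1) * (Gx * Gy) := by
    apply mul_right_cancel₀ hMne
    calc Gxy * (MvPowerSeries.X 1 * Gx + MvPowerSeries.X 0 * Gy
          - MvPowerSeries.X 0 * MvPowerSeries.X 1) * (phiX bernE * phiY bernE)
        = Gxy * ((Gx * phiX bernE) * (MvPowerSeries.X 1 * phiY bernE)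
            + (Gy * phiY bernE) * (MvPowerSeries.X 0 * phiX bernE)
            - (MvPowerSeries.X 0 * phiX bernE) * (MvPowerSeries.X 1 * phiY bernE)) := by ring
      _ = Gxy * (phiX (PowerSeries.exp ℚ) * (phiY (PowerSeries.exp ℚ) - 1)
            + phiY (PowerSeries.exp ℚ) * (phiX (PowerSeries.exp ℚ) - 1)
            - (phiX (PowerSeries.exp ℚ) - 1) * (phiY (PowerSeries.exp ℚ) - 1)) := by
          rw [r1, r2, r3, r4]
      _ = Gxy * (phiX (PowerSeries.exp ℚ) * phiY (PowerSeries.exp ℚ)) - Gxy := by ring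
      _ = Gxy * phiXY (PowerSeries.exp ℚ) - Gxy := by rw [r5]
      _ = Gxy * (phiXY (PowerSeries.exp ℚ) - 1) := by ring
      _ = (MvPowerSeries.X 0 + MvPowerSeries.X 1) * phiXY (PowerSeries.exp ℚ) := r6
      _ = (MvPowerSeries.X 0 + MvPowerSeries.X 1)
            * (phiX (PowerSeries.exp ℚ) * phiY (PowerSeries.exp ℚ)) := by rw [r5]
      _ = (MvPowerSeries.X 0 + MvPowerSeries.X 1)
            * ((Gx * phiX bernE) * (Gy * phiY bernE)) := by rw [r1, r3]
      _ = (MvPowerSeries.X 0 + MvPowerSeries.X 1) * (Gx * Gy)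
            * (phiX bernE * phiY bernE) := by ring
  have hx01 : (MvPowerSeries.X 0 * MvPowerSeries.X 1 : MvPowerSeries (Fin 2) ℚ) ≠ 0 :=
    mul_ne_zero (Xne 0) (Xne 1)
  apply mul_left_cancel₀ hx01
  linear_combination (-(MvPowerSeries.X 1 : MvPowerSeries (Fin 2) ℚ)) * hL1
    - (MvPowerSeries.X 0 : MvPowerSeries (Fin 2) ℚ) * hL2 - key
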